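/- Let θ ∈ ℝ_{>0} and a ∈ ℝ, and consider the equation θx / tanh(θx) = x² + a for x ∈ (0, ∞). If a ≤ 0, this equation has exactly one solution in (0, ∞). If a > 0, it has at most two solutions in (0, ∞). -/

import Mathlib

noncomputable section

open Real Set

namespace TanhEqAux


lemma pos_of_hasDerivAt (f g : ℝ → ℝ) (h0 : f 0 = 0)
    (hd : ∀ t : ℝ, HasDerivAt f (g t) t) (hg : ∀ t : ℝ, 0 < t → 0 < g t) :
    ∀ t : ℝ, 0 < t → 0 < f t := by
  have hmono : StrictMonoOn f (Ici 0) := by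
    apply strictMonoOn_of_deriv_pos (convex_Ici 0)
    · exact fun t _ => (hd t).continuousAt.continuousWithinAt
    · intro t ht
      rw [interior_Ici, mem_Ioi] at ht
      rw [(hd t).deriv]
      exact hg t ht
  intro t ht
  have := hmono self_mem_Ici (le_of_lt ht) ht
  rwa [h0] at this

lemma hasDerivAt_even (a b c d t : ℝ) :
    HasDerivAt (fun t : ℝ => a * Real.cosh (3*t) + b * Real.cosh t + c * (t * Real.sinh t)
      + d * (t^2 * Real.cosh t))
      (3*a * Real.sinh (3*t) + (b + c) * Real.sinh t + (c + 2*d) * (t * Real.cosh t)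
      + d * (t^2 * Real.sinh t)) t := by
  have hlin : HasDerivAt (fun x : ℝ => 3*x) 3 t := by simpa using (hasDerivAt_id t).const_mul 3
  have h3 : HasDerivAt (fun t : ℝ => Real.cosh (3*t)) (Real.sinh (3*t) * 3) t := by
    simpa [Function.comp_def] using (Real.hasDerivAt_cosh (3*t)).comp t hlin
  have h1 := (h3.const_mul a).add ((Real.hasDerivAt_cosh t).const_mul b)
  have h2 := (((hasDerivAt_id t).mul (Real.hasDerivAt_sinh t)).const_mul c)
  have h4 := (((hasDerivAt_pow 2 t).mul (Real.hasDerivAt_cosh t)).const_mul d)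
  have := (h1.add h2).add h4
  refine HasDerivAt.congr_deriv this ?_
  simp only [id_eq]
  push_cast
  ring

lemma hasDerivAt_odd (a b c d t : ℝ) :
    HasDerivAt (fun t : ℝ => a * Real.sinh (3*t) + b * Real.sinh t + c * (t * Real.cosh t)
      + d * (t^2 * Real.sinh t))
      (3*a * Real.cosh (3*t) + (b + c) * Real.cosh t + (c + 2*d) * (t * Real.sinh t)
      + d * (t^2 * Real.cosh t)) t := by
  have hlin : HasDerivAt (fun x : ℝ => 3*x) 3 t := by simpa using (hasDerivAt_id t).const_mul 3
  have h3 : HasDerivAt (fun t : ℝ => Real.sinh (3*t)) (Real.cosh (3*t) * 3) t := by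
    simpa [Function.comp_def] using (Real.hasDerivAt_sinh (3*t)).comp t hlin
  have h1 := (h3.const_mul a).add ((Real.hasDerivAt_sinh t).const_mul b)
  have h2 := (((hasDerivAt_id t).mul (Real.hasDerivAt_cosh t)).const_mul c)
  have h4 := (((hasDerivAt_pow 2 t).mul (Real.hasDerivAt_sinh t)).const_mul d)
  have := (h1.add h2).add h4
  refine HasDerivAt.congr_deriv this ?_
  simp only [id_eq]
  push_cast
  ring

/-- `sinh t < t * cosh t` for `t > 0`. -/
lemma sinh_lt_mul_cosh {t : ℝ} (ht : 0 < t) : Real.sinh t < t * Real.cosh t := by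
  have key := pos_of_hasDerivAt (fun t : ℝ => t * Real.cosh t - Real.sinh t)
      (fun t : ℝ => t * Real.sinh t) (by simp)
      (fun t => by
        have := ((hasDerivAt_id t).mul (Real.hasDerivAt_cosh t)).sub (Real.hasDerivAt_sinh t)
        refine HasDerivAt.congr_deriv this ?_
        simp only [id_eq]
        ring)
      (fun t ht => mul_pos ht (by rwa [Real.sinh_pos_iff]))
  have h : 0 < t * Real.cosh t - Real.sinh t := by simpa using key t ht
  linarith



lemma F6_pos (t : ℝ) (ht : 0 < t) :
    0 < (729/4) * Real.cosh (3*t) + (-217/4) * Real.cosh t + (-23) * (t * Real.sinh t)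
      + (-2) * (t^2 * Real.cosh t) := by
  have hsq := Real.cosh_sq t
  have hs : t ≤ Real.sinh t := Real.self_le_sinh_iff.mpr ht.le
  have hsc : Real.sinh t < t * Real.cosh t := sinh_lt_mul_cosh ht
  have hcp : (0:ℝ) < Real.cosh t := Real.cosh_pos t
  rw [Real.cosh_three_mul]
  nlinarith [mul_pos ht hcp, mul_pos (mul_pos ht ht) hcp, sq_nonneg (Real.sinh t - t),
    mul_le_mul_of_nonneg_left hs ht.le, mul_lt_mul_of_pos_left hsc ht,
    mul_le_mul_of_nonneg_left (mul_le_mul hs hs (le_of_lt ht) (le_trans ht.le hs)) hcp.le]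

lemma F5_pos : ∀ t : ℝ, 0 < t →
    0 < (243/4) * Real.sinh (3*t) + (-141/4) * Real.sinh t + (-19) * (t * Real.cosh t)
      + (-2) * (t^2 * Real.sinh t) := by
  apply pos_of_hasDerivAt _ (fun t => (729/4) * Real.cosh (3*t) + (-217/4) * Real.cosh t
      + (-23) * (t * Real.sinh t) + (-2) * (t^2 * Real.cosh t))
  · norm_num
  · intro t
    convert hasDerivAt_odd (243/4) (-141/4) (-19) (-2) t using 1
    norm_num
  · exact F6_pos

lemma F4_pos : ∀ t : ℝ, 0 < t →
    0 < (81/4) * Real.cosh (3*t) + (-81/4) * Real.cosh t + (-15) * (t * Real.sinh t)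
      + (-2) * (t^2 * Real.cosh t) := by
  apply pos_of_hasDerivAt _ (fun t => (243/4) * Real.sinh (3*t) + (-141/4) * Real.sinh t
      + (-19) * (t * Real.cosh t) + (-2) * (t^2 * Real.sinh t))
  · norm_num
  · intro t
    convert hasDerivAt_even (81/4) (-81/4) (-15) (-2) t using 1
    norm_num
  · exact F5_pos

lemma F3_pos : ∀ t : ℝ, 0 < t →
    0 < (27/4) * Real.sinh (3*t) + (-37/4) * Real.sinh t + (-11) * (t * Real.cosh t)
      + (-2) * (t^2 * Real.sinh t) := by
  apply pos_of_hasDerivAt _ (fun t => (81/4) * Real.cosh (3*t) + (-81/4) * Real.cosh t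
      + (-15) * (t * Real.sinh t) + (-2) * (t^2 * Real.cosh t))
  · norm_num
  · intro t
    convert hasDerivAt_odd (27/4) (-37/4) (-11) (-2) t using 1
    norm_num
  · exact F4_pos

lemma F2_pos : ∀ t : ℝ, 0 < t →
    0 < (9/4) * Real.cosh (3*t) + (-9/4) * Real.cosh t + (-7) * (t * Real.sinh t)
      + (-2) * (t^2 * Real.cosh t) := by
  apply pos_of_hasDerivAt _ (fun t => (27/4) * Real.sinh (3*t) + (-37/4) * Real.sinh t
      + (-11) * (t * Real.cosh t) + (-2) * (t^2 * Real.sinh t))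
  · norm_num
  · intro t
    convert hasDerivAt_even (9/4) (-9/4) (-7) (-2) t using 1
    norm_num
  · exact F3_pos

lemma F1_pos : ∀ t : ℝ, 0 < t →
    0 < (3/4) * Real.sinh (3*t) + (3/4) * Real.sinh t + (-3) * (t * Real.cosh t)
      + (-2) * (t^2 * Real.sinh t) := by
  apply pos_of_hasDerivAt _ (fun t => (9/4) * Real.cosh (3*t) + (-9/4) * Real.cosh t
      + (-7) * (t * Real.sinh t) + (-2) * (t^2 * Real.cosh t))
  · norm_num
  · intro t
    convert hasDerivAt_odd (3/4) (3/4) (-3) (-2) t using 1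
    norm_num
  · exact F2_pos

lemma F0_pos : ∀ t : ℝ, 0 < t →
    0 < (1/4) * Real.cosh (3*t) + (-1/4) * Real.cosh t + (1) * (t * Real.sinh t)
      + (-2) * (t^2 * Real.cosh t) := by
  apply pos_of_hasDerivAt _ (fun t => (3/4) * Real.sinh (3*t) + (3/4) * Real.sinh t
      + (-3) * (t * Real.cosh t) + (-2) * (t^2 * Real.sinh t))
  · norm_num
  · intro t
    convert hasDerivAt_even (1/4) (-1/4) (1) (-2) t using 1
    norm_num
  · exact F1_pos

/-- The key inequality. -/
lemma key_ineq {t : ℝ} (ht : 0 < t) :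
    2 * t^2 * Real.cosh t < Real.sinh t ^ 2 * Real.cosh t + t * Real.sinh t := by
  have h0 := F0_pos t ht
  have e : Real.cosh (3*t)/4 - Real.cosh t/4 = Real.sinh t ^ 2 * Real.cosh t := by
    rw [Real.cosh_three_mul]
    linear_combination Real.cosh t * Real.cosh_sq t
  linarith


/-- the function `r t = (sinh t cosh t - t)/(t sinh² t)`, proportional to `P'(t)/t`. -/
def rf (t : ℝ) : ℝ := (Real.sinh t * Real.cosh t - t) / (t * Real.sinh t ^ 2)

lemma rf_hasDerivAt {t : ℝ} (ht : 0 < t) :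
    HasDerivAt rf
      (((Real.cosh t * Real.cosh t + Real.sinh t * Real.sinh t - 1) * (t * Real.sinh t ^ 2)
        - (Real.sinh t * Real.cosh t - t) * (1 * Real.sinh t ^ 2 + t * (2 * Real.sinh t ^ 1 * Real.cosh t)))
        / (t * Real.sinh t ^ 2) ^ 2) t := by
  have hs : Real.sinh t ≠ 0 := by positivity
  have hD : t * Real.sinh t ^ 2 ≠ 0 := by positivity
  have hN : HasDerivAt (fun t : ℝ => Real.sinh t * Real.cosh t - t)
      (Real.cosh t * Real.cosh t + Real.sinh t * Real.sinh t - 1) t := by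
    have := ((Real.hasDerivAt_sinh t).mul (Real.hasDerivAt_cosh t)).sub (hasDerivAt_id t)
    exact this
  have hDd : HasDerivAt (fun t : ℝ => t * Real.sinh t ^ 2)
      (1 * Real.sinh t ^ 2 + t * (2 * Real.sinh t ^ 1 * Real.cosh t)) t := by
    have := (hasDerivAt_id t).mul ((Real.hasDerivAt_sinh t).pow 2)
    refine HasDerivAt.congr_deriv this ?_
    norm_num
  exact hN.div hDd hD

lemma rf_deriv_neg {t : ℝ} (ht : 0 < t) : deriv rf t < 0 := by
  rw [(rf_hasDerivAt ht).deriv]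
  have hs : 0 < Real.sinh t := by rwa [Real.sinh_pos_iff]
  have hD : (0:ℝ) < (t * Real.sinh t ^ 2) ^ 2 := by positivity
  apply div_neg_of_neg_of_pos _ hD
  have hkey := key_ineq ht
  have e : (Real.cosh t * Real.cosh t + Real.sinh t * Real.sinh t - 1) * (t * Real.sinh t ^ 2)
        - (Real.sinh t * Real.cosh t - t) * (1 * Real.sinh t ^ 2 + t * (2 * Real.sinh t ^ 1 * Real.cosh t))
      = -Real.sinh t * (Real.sinh t ^ 2 * Real.cosh t + t * Real.sinh t - 2 * t^2 * Real.cosh t) -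
        (t * Real.sinh t ^ 2) * (Real.cosh t ^ 2 - Real.sinh t ^ 2 - 1) := by
    ring
  rw [e, Real.cosh_sq]
  have : 0 < Real.sinh t ^ 2 * Real.cosh t + t * Real.sinh t - 2 * t^2 * Real.cosh t := by linarith
  nlinarith [mul_pos hs this]

lemma rf_strictAnti : StrictAntiOn rf (Ioi 0) := by
  apply strictAntiOn_of_deriv_neg (convex_Ioi 0)
  · exact fun t ht => (rf_hasDerivAt ht).continuousAt.continuousWithinAt
  · intro t ht
    rw [interior_Ioi] at ht
    exact rf_deriv_neg ht

/-- The G function: `G s = P(θ √s)` where `P t = t cosh t / sinh t`. -/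
def Gf (θ : ℝ) (s : ℝ) : ℝ :=
  θ * Real.sqrt s * Real.cosh (θ * Real.sqrt s) / Real.sinh (θ * Real.sqrt s)

lemma Gf_hasDerivAt {θ s : ℝ} (hθ : 0 < θ) (hs : 0 < s) :
    HasDerivAt (Gf θ) (θ^2/2 * rf (θ * Real.sqrt s)) s := by
  have hrs : 0 < Real.sqrt s := Real.sqrt_pos.mpr hs
  have hu : 0 < θ * Real.sqrt s := mul_pos hθ hrs
  have hsh : Real.sinh (θ * Real.sqrt s) ≠ 0 := by
    have : 0 < Real.sinh (θ * Real.sqrt s) := by rwa [Real.sinh_pos_iff]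
    exact this.ne'
  have hinner : HasDerivAt (fun s : ℝ => θ * Real.sqrt s) (θ * (1 / (2 * Real.sqrt s))) s :=
    (Real.hasDerivAt_sqrt hs.ne').const_mul θ
  set u := θ * Real.sqrt s with hu_def
  have houter : HasDerivAt (fun t : ℝ => t * Real.cosh t / Real.sinh t)
      (((1 * Real.cosh u + u * Real.sinh u) * Real.sinh u - u * Real.cosh u * Real.cosh u)
        / Real.sinh u ^ 2) u := by
    have := (((hasDerivAt_id u).mul (Real.hasDerivAt_cosh u)).div (Real.hasDerivAt_sinh u) hsh)
    exact this
  have hcomp := houter.comp s hinner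
  have : HasDerivAt (Gf θ)
      ((((1 * Real.cosh u + u * Real.sinh u) * Real.sinh u - u * Real.cosh u * Real.cosh u)
        / Real.sinh u ^ 2) * (θ * (1 / (2 * Real.sqrt s)))) s := by
    exact hcomp
  convert this using 1
  have hcsh := Real.cosh_sq u
  rw [hu_def] at hcsh ⊢
  rw [rf]
  field_simp
  linear_combination (θ*Real.sqrt s) * hcsh

lemma Gf_strictConcaveOn {θ : ℝ} (hθ : 0 < θ) : StrictConcaveOn ℝ (Ioi 0) (Gf θ) := by
  apply StrictAntiOn.strictConcaveOn_of_deriv (convex_Ioi 0)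
  · exact fun s hs => (Gf_hasDerivAt hθ hs).continuousAt.continuousWithinAt
  · rw [interior_Ioi]
    intro s hs t ht hst
    rw [mem_Ioi] at hs ht
    rw [(Gf_hasDerivAt hθ hs).deriv, (Gf_hasDerivAt hθ ht).deriv]
    have h1 : θ * Real.sqrt s < θ * Real.sqrt t :=
      mul_lt_mul_of_pos_left (Real.sqrt_lt_sqrt hs.le hst) hθ
    have h2 : (0:ℝ) < θ * Real.sqrt s := mul_pos hθ (Real.sqrt_pos.mpr hs)
    have := rf_strictAnti (mem_Ioi.mpr h2) (mem_Ioi.mpr (h2.trans h1)) h1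
    have hθ2 : (0:ℝ) < θ^2/2 := by positivity
    exact mul_lt_mul_of_pos_left this hθ2



lemma Gf_gt_one {θ s : ℝ} (hθ : 0 < θ) (hs : 0 < s) : 1 < Gf θ s := by
  have hu : 0 < θ * Real.sqrt s := mul_pos hθ (Real.sqrt_pos.mpr hs)
  have hsh : 0 < Real.sinh (θ * Real.sqrt s) := by rwa [Real.sinh_pos_iff]
  rw [Gf, lt_div_iff₀ hsh, one_mul]
  exact sinh_lt_mul_cosh hu

lemma Gf_le {θ s : ℝ} (hθ : 0 < θ) (hs : 0 < s) : Gf θ s ≤ θ * Real.sqrt s + 1 := by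
  set u := θ * Real.sqrt s with hu_def
  have hu : 0 < u := mul_pos hθ (Real.sqrt_pos.mpr hs)
  have hsh : 0 < Real.sinh u := by rwa [Real.sinh_pos_iff]
  rw [Gf, ← hu_def, div_le_iff₀ hsh]
  have h1 : Real.cosh u - Real.sinh u = Real.exp (-u) := Real.cosh_sub_sinh u
  have h2 : Real.exp (-u) ≤ 1 := Real.exp_le_one_iff.mpr (by linarith)
  have h3 : u ≤ Real.sinh u := Real.self_le_sinh_iff.mpr hu.le
  nlinarith

/-- chord inequality from strict concavity -/
lemma concave_chord {θ : ℝ} (hθ : 0 < θ) {s1 s2 s3 : ℝ} (h1 : 0 < s1) (h12 : s1 < s2)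
    (h23 : s2 < s3) :
    ((s3-s2)/(s3-s1)) * Gf θ s1 + ((s2-s1)/(s3-s1)) * Gf θ s3 < Gf θ s2 := by
  have hconc := Gf_strictConcaveOn hθ
  have hd : (0:ℝ) < s3 - s1 := by linarith
  have hl : (0:ℝ) < (s3-s2)/(s3-s1) := div_pos (by linarith) hd
  have hm : (0:ℝ) < (s2-s1)/(s3-s1) := div_pos (by linarith) hd
  have hsum : (s3-s2)/(s3-s1) + (s2-s1)/(s3-s1) = 1 := by field_simp; ring
  have hcomb : ((s3-s2)/(s3-s1)) * s1 + ((s2-s1)/(s3-s1)) * s3 = s2 := by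
    field_simp; ring
  have := hconc.2 (mem_Ioi.mpr h1) (mem_Ioi.mpr (h1.trans (h12.trans h23)))
    (ne_of_lt (h12.trans h23)) hl hm hsum
  rw [smul_eq_mul, smul_eq_mul, smul_eq_mul, smul_eq_mul, hcomb] at this
  exact this

lemma no_three {θ a : ℝ} (hθ : 0 < θ) {s1 s2 s3 : ℝ} (h1 : 0 < s1) (h12 : s1 < s2)
    (h23 : s2 < s3) (e1 : Gf θ s1 = s1 + a) (e2 : Gf θ s2 = s2 + a) (e3 : Gf θ s3 = s3 + a) :
    False := by
  have hch := concave_chord hθ h1 h12 h23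
  rw [e1, e2, e3] at hch
  have hd : (0:ℝ) < s3 - s1 := by linarith
  have hcomb : ((s3-s2)/(s3-s1)) * (s1+a) + ((s2-s1)/(s3-s1)) * (s3+a) = s2 + a := by
    field_simp; ring
  linarith

lemma no_three_unordered {θ a : ℝ} (hθ : 0 < θ) {u v w : ℝ} (hu : 0 < u) (hv : 0 < v)
    (hw : 0 < w) (huv : u ≠ v) (huw : u ≠ w) (hvw : v ≠ w)
    (eu : Gf θ u = u + a) (ev : Gf θ v = v + a) (ew : Gf θ w = w + a) : False := by
  rcases huv.lt_or_gt with h1|h1 <;> rcases huw.lt_or_gt with h2|h2 <;>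
    rcases hvw.lt_or_gt with h3|h3
  · exact no_three hθ hu h1 h3 eu ev ew
  · exact no_three hθ hu h2 h3 eu ew ev
  · linarith
  · exact no_three hθ hw h2 h1 ew eu ev
  · exact no_three hθ hv h1 h2 ev eu ew
  · linarith
  · exact no_three hθ hv h3 h2 ev ew eu
  · exact no_three hθ hw h3 h1 ew ev eu

lemma exists_solution {θ a : ℝ} (hθ : 0 < θ) (ha : a ≤ 0) :
    ∃ s : ℝ, 1/2 ≤ s ∧ Gf θ s = s + a := by
  set s₁ : ℝ := max (4*θ^2) (2*(1-a)) + 1 with hs₁def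
  have hs₁pos : (0:ℝ) < s₁ := by
    have : (0:ℝ) ≤ max (4*θ^2) (2*(1-a)) := le_max_of_le_left (by positivity)
    linarith
  have hhalf : (1/2:ℝ) ≤ s₁ := by
    have : (0:ℝ) ≤ max (4*θ^2) (2*(1-a)) := le_max_of_le_left (by positivity)
    linarith
  set f : ℝ → ℝ := fun s => Gf θ s - s with hfdef
  have hcont : ContinuousOn f (Icc (1/2) s₁) := by
    intro s hs
    have hspos : 0 < s := lt_of_lt_of_le (by norm_num) hs.1
    exact ((Gf_hasDerivAt hθ hspos).continuousAt.sub continuousAt_id).continuousWithinAt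
  have hf0 : a < f (1/2) := by
    have := Gf_gt_one hθ (show (0:ℝ) < 1/2 by norm_num)
    simp only [hfdef]
    linarith
  have hf1 : f s₁ < a := by
    have hGle := Gf_le hθ hs₁pos
    have h2θ : 2*θ ≤ Real.sqrt s₁ := by
      rw [show (2*θ) = Real.sqrt ((2*θ)^2) from (Real.sqrt_sq (by positivity)).symm]
      apply Real.sqrt_le_sqrt
      have : 4*θ^2 ≤ max (4*θ^2) (2*(1-a)) := le_max_left _ _
      nlinarith
    have hsqpos : 0 < Real.sqrt s₁ := Real.sqrt_pos.mpr hs₁pos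
    have hθs : θ * Real.sqrt s₁ ≤ s₁ / 2 := by
      have hms : Real.sqrt s₁ * Real.sqrt s₁ = s₁ := Real.mul_self_sqrt hs₁pos.le
      nlinarith
    have hs₁big : 2*(1-a) < s₁ := by
      have := le_max_right (4*θ^2) (2*(1-a))
      linarith
    simp only [hfdef]
    linarith
  have hmem : a ∈ Icc (f s₁) (f (1/2)) := ⟨hf1.le, hf0.le⟩
  obtain ⟨s, hsmem, hfs⟩ := intermediate_value_Icc' hhalf hcont hmem
  exact ⟨s, hsmem.1, by simp only [hfdef] at hfs; linarith⟩

lemma unique_solution {θ a : ℝ} (hθ : 0 < θ) (ha : a ≤ 0) {z1 z2 : ℝ} (h1 : 0 < z1)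
    (h2 : 0 < z2) (e1 : Gf θ z1 = z1 + a) (e2 : Gf θ z2 = z2 + a) : z1 = z2 := by
  have key : ∀ w1 w2 : ℝ, 0 < w1 → 0 < w2 → Gf θ w1 = w1 + a → Gf θ w2 = w2 + a →
      w1 < w2 → False := by
    intro w1 w2 hw1 hw2 ew1 ew2 hlt
    have hgt : (1:ℝ) < w1 + a := ew1 ▸ Gf_gt_one hθ hw1
    have hhalf : (1/2:ℝ) < w1 := by linarith
    have hch := concave_chord hθ (show (0:ℝ) < 1/2 by norm_num) hhalf hlt
    have hG0 : (1:ℝ) < Gf θ (1/2) := Gf_gt_one hθ (by norm_num)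
    rw [ew1, ew2] at hch
    have hd : (0:ℝ) < w2 - 1/2 := by linarith
    have hl : (0:ℝ) < (w2-w1)/(w2-1/2) := by
      apply div_pos <;> linarith
    have hne : w2 - 1/2 ≠ 0 := ne_of_gt hd
    have hcomb : ((w2-w1)/(w2-1/2)) * (1/2+a) + ((w1-1/2)/(w2-1/2)) * (w2+a) = w1 + a := by
      rw [div_mul_eq_mul_div, div_mul_eq_mul_div, ← add_div, div_eq_iff hne]
      ring
    have hgG : ((w2-w1)/(w2-1/2)) * (1/2+a) < ((w2-w1)/(w2-1/2)) * Gf θ (1/2) := by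
      apply mul_lt_mul_of_pos_left _ hl
      linarith
    linarith
  rcases lt_trichotomy z1 z2 with h|h|h
  · exact absurd (key z1 z2 h1 h2 e1 e2 h) not_false
  · exact h
  · exact absurd (key z2 z1 h2 h1 e2 e1 h) not_false

lemma sq_inj {x y : ℝ} (hx : 0 < x) (hy : 0 < y) (h : x^2 = y^2) : x = y := by
  have h' : (x - y) * (x + y) = 0 := by linear_combination h
  rcases mul_eq_zero.mp h' with h''|h'' <;> [linarith; linarith]

lemma translate {θ a x : ℝ} (hx : 0 < x) :
    θ * x / Real.tanh (θ * x) = x ^ 2 + a ↔ Gf θ (x^2) = x^2 + a := by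
  have hsx : Real.sqrt (x^2) = x := Real.sqrt_sq hx.le
  rw [Gf, hsx, Real.tanh_eq_sinh_div_cosh, div_div_eq_mul_div]

end TanhEqAux

open TanhEqAux in
/-- **Lemma.** Fix `θ > 0` and `a ∈ ℝ`, and consider the equation
`θ x / tanh(θ x) = x² + a` for `x ∈ (0, ∞)`.
If `a ≤ 0`, it has exactly one solution in `(0, ∞)`;
if `a > 0`, it has at most two solutions in `(0, ∞)`. -/
theorem tanh_equation_solutions (θ a : ℝ) (hθ : 0 < θ) :
    (a ≤ 0 → ∃! x : ℝ, 0 < x ∧ θ * x / Real.tanh (θ * x) = x ^ 2 + a) ∧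
    (0 < a → ∃ x₁ x₂ : ℝ, ∀ x : ℝ, 0 < x →
      θ * x / Real.tanh (θ * x) = x ^ 2 + a → x = x₁ ∨ x = x₂) := by
  constructor
  · -- a ≤ 0 : exactly one solution
    intro ha
    obtain ⟨s, hs_half, hseq⟩ := exists_solution hθ ha
    have hspos : 0 < s := lt_of_lt_of_le (by norm_num) hs_half
    have hxpos : 0 < Real.sqrt s := Real.sqrt_pos.mpr hspos
    have hxsq : Real.sqrt s ^ 2 = s := Real.sq_sqrt hspos.le
    refine ⟨Real.sqrt s, ⟨hxpos, ?_⟩, ?_⟩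
    · rw [translate hxpos, hxsq]
      exact hseq
    · rintro y ⟨hy, hyeq⟩
      rw [translate hy] at hyeq
      have h2 : y ^ 2 = s :=
        unique_solution hθ ha (by positivity) hspos hyeq hseq
      have := sq_inj hy hxpos (by rw [h2, hxsq])
      exact this
  · -- 0 < a : at most two solutions
    intro _
    by_cases h0 : ∃ x : ℝ, 0 < x ∧ θ * x / Real.tanh (θ * x) = x ^ 2 + a
    · obtain ⟨x₀, hx₀, he₀⟩ := h0
      by_cases h1 : ∃ y : ℝ, (0 < y ∧ θ * y / Real.tanh (θ * y) = y ^ 2 + a) ∧ y ≠ x₀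
      · obtain ⟨y₀, ⟨hy₀, he₁⟩, hne⟩ := h1
        refine ⟨x₀, y₀, fun x hx he => ?_⟩
        by_contra hc
        push_neg at hc
        obtain ⟨hcx, hcy⟩ := hc
        apply no_three_unordered (a := a) hθ (show (0:ℝ) < x^2 by positivity)
          (show (0:ℝ) < x₀^2 by positivity) (show (0:ℝ) < y₀^2 by positivity)
          (fun h => hcx (sq_inj hx hx₀ h)) (fun h => hcy (sq_inj hx hy₀ h))
          (fun h => hne (sq_inj hy₀ hx₀ h.symm))
          ((translate hx).mp he) ((translate hx₀).mp he₀) ((translate hy₀).mp he₁)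
      · push_neg at h1
        refine ⟨x₀, x₀, fun x hx he => ?_⟩
        left
        exact h1 x ⟨hx, he⟩
    · push_neg at h0
      refine ⟨1, 1, fun x hx he => absurd he (h0 x hx)⟩
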